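/- Let n ≥ 0 and let q be a positive integer, and set N_r := 1 + q^r + q^{2r} + … + q^{nr} for r ≥ 1. With a_i := (1/i)·Σ_{d ∣ i} μ(i/d)·N_d and π_w := Σ_{λ : |λ| = w} (−1)^{ℓ(λ)} · Π_{i≥1} C(a_i, λ_i) (sum over all partitions λ of weight w), one has Σ_{w=0}^{n+1} π_w = 0. -/

import Mathlib

open scoped Classical

/-- Generalized binomial coefficient `C(a, k) = a(a-1)⋯(a-k+1)/k!` for `a : ℚ`. -/
def genChoose (a : ℚ) (k : ℕ) : ℚ :=
  (∏ j ∈ Finset.range k, (a - (j : ℚ))) / (Nat.factorial k : ℚ)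

/-- `a N i = (1/i) Σ_{d ∣ i} μ(i/d) N d`, the Möbius convolution divided by `i`. -/
noncomputable def moebiusConv (N : ℕ → ℚ) (i : ℕ) : ℚ :=
  (1 / (i : ℚ)) * ∑ d ∈ i.divisors, ((ArithmeticFunction.moebius (i / d) : ℤ) : ℚ) * N d

/-- `π_w(N) = Σ_{|λ| = w} (−1)^{ℓ(λ)} Π_{i ≥ 1} C(a_i, λ_i)`, the sum over all partitions `λ`
of weight `w`, where `λ_i` is the number of parts of `λ` equal to `i` and
`a_i = (1/i) Σ_{d ∣ i} μ(i/d) N d`. -/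
noncomputable def piW (N : ℕ → ℚ) (w : ℕ) : ℚ :=
  ∑ p : Nat.Partition w, (-1 : ℚ) ^ (Multiset.card p.parts) *
    ∏ i ∈ p.parts.toFinset, genChoose (moebiusConv N i) (p.parts.count i)


open Finset PowerSeries

lemma genChoose_zero (a : ℚ) : genChoose a 0 = 1 := by simp [genChoose]

lemma prod_range_shift (a : ℚ) (k : ℕ) :
    ∏ j ∈ range (k+1), (a - (j:ℚ)) = (∏ j ∈ range k, (a - 1 - (j:ℚ))) * a := by
  rw [Finset.prod_range_succ']
  congr 1
  · apply Finset.prod_congr rfl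
    intro j _
    push_cast
    ring
  · simp

lemma genChoose_pascal (a : ℚ) (k : ℕ) :
    genChoose a (k+1) = genChoose (a-1) (k+1) + genChoose (a-1) k := by
  have hfac : ((k+1).factorial : ℚ) ≠ 0 := by exact_mod_cast (Nat.factorial_pos _).ne'
  have hfac' : ((k).factorial : ℚ) ≠ 0 := by exact_mod_cast (Nat.factorial_pos _).ne'
  have h1 := prod_range_shift a k
  have h2 : ∏ j ∈ range (k+1), (a - 1 - (j:ℚ)) =
      (∏ j ∈ range k, (a - 1 - (j:ℚ))) * (a - 1 - k) := Finset.prod_range_succ _ _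
  have hfe : (((k+1).factorial : ℕ) : ℚ) = (k+1) * (k.factorial : ℚ) := by
    rw [Nat.factorial_succ]; push_cast; ring
  rw [genChoose, genChoose, genChoose, h1, h2, hfe]
  have hk1 : ((k:ℚ)+1) ≠ 0 := by positivity
  field_simp
  ring

lemma genChoose_mul_succ (a : ℚ) (k : ℕ) :
    ((k+1 : ℕ) : ℚ) * genChoose a (k+1) = a * genChoose (a-1) k := by
  have hfac' : ((k).factorial : ℚ) ≠ 0 := by exact_mod_cast (Nat.factorial_pos _).ne'
  have hfe : (((k+1).factorial : ℕ) : ℚ) = (k+1) * (k.factorial : ℚ) := by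
    rw [Nat.factorial_succ]; push_cast; ring
  rw [genChoose, genChoose, prod_range_shift a k, hfe]
  have hk1 : ((k:ℚ)+1) ≠ 0 := by positivity
  push_cast
  field_simp


namespace Stmt5

/-- `X f'` as a coefficientwise operator. -/
noncomputable def Dop (f : ℚ⟦X⟧) : ℚ⟦X⟧ := PowerSeries.mk fun m => (m : ℚ) * coeff m f

lemma coeff_Dop (f : ℚ⟦X⟧) (m : ℕ) : coeff m (Dop f) = (m:ℚ) * coeff m f := by
  simp [Dop]

lemma Dop_one : Dop 1 = 0 := by
  ext m
  rcases m with _ | m <;> simp [coeff_Dop]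

lemma Dop_mul (f g : ℚ⟦X⟧) : Dop (f * g) = Dop f * g + f * Dop g := by
  ext m
  rw [coeff_Dop, coeff_mul, map_add, coeff_mul, coeff_mul, Finset.mul_sum,
    ← Finset.sum_add_distrib]
  apply Finset.sum_congr rfl
  intro p hp
  rw [Finset.HasAntidiagonal.mem_antidiagonal] at hp
  have hm : (m:ℚ) = (p.1 : ℚ) + (p.2 : ℚ) := by exact_mod_cast congrArg (Nat.cast (R := ℚ)) hp.symm
  rw [coeff_Dop, coeff_Dop, hm]
  ring

lemma Dop_prod {ι : Type*} (s : Finset ι) (F T : ι → ℚ⟦X⟧)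
    (h : ∀ i ∈ s, Dop (F i) = -(T i * F i)) :
    Dop (∏ i ∈ s, F i) = -((∑ i ∈ s, T i) * ∏ i ∈ s, F i) := by
  classical
  induction s using Finset.induction_on with
  | empty => simp [Dop_one]
  | @insert a s ha ih =>
    rw [Finset.prod_insert ha, Finset.sum_insert ha, Dop_mul,
      h a (Finset.mem_insert_self a s), ih (fun i hi => h i (Finset.mem_insert_of_mem hi))]
    ring

/-- `(1 - X^i)^a` as an explicit power series. -/
noncomputable def Bser (a : ℚ) (i : ℕ) : ℚ⟦X⟧ :=
  PowerSeries.mk fun m => if i ∣ m then (-1)^(m/i) * genChoose a (m/i) else 0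

/-- geometric series in `X^i`. -/
noncomputable def Gser (i : ℕ) : ℚ⟦X⟧ :=
  PowerSeries.mk fun m => if i ∣ m then 1 else 0

lemma coeff_Bser (a : ℚ) (i m : ℕ) :
    coeff m (Bser a i) = if i ∣ m then (-1)^(m/i) * genChoose a (m/i) else 0 := by
  simp [Bser]

lemma coeff_Gser (i m : ℕ) : coeff m (Gser i) = if i ∣ m then 1 else 0 := by
  simp [Gser]

lemma constantCoeff_Bser (a : ℚ) (i : ℕ) : constantCoeff (Bser a i) = 1 := by
  rw [← coeff_zero_eq_constantCoeff, coeff_Bser]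
  simp [genChoose_zero]

lemma not_dvd_sub {i m : ℕ} (him : i ≤ m) (h : ¬ i ∣ m) : ¬ i ∣ m - i := by
  intro hd
  exact h (by simpa [Nat.sub_add_cancel him] using Nat.dvd_add hd (dvd_refl i))

lemma Bser_eq (a : ℚ) {i : ℕ} (hi : 0 < i) :
    Bser a i = Bser (a-1) i - Bser (a-1) i * X^i := by
  ext m
  rw [map_sub, coeff_Bser, coeff_Bser, PowerSeries.coeff_mul_X_pow']
  by_cases h : i ∣ m
  · obtain ⟨k, rfl⟩ := h
    rcases k with _ | k
    · simp [Nat.not_le_of_lt hi, genChoose_zero]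
    · have hle : i ≤ i * (k+1) := Nat.le_mul_of_pos_right i (Nat.succ_pos k)
      have hsub : i * (k+1) - i = i * k := by ring_nf; omega
      have d1 : i ∣ i * (k+1) := dvd_mul_right _ _
      have d2 : i ∣ i * k := dvd_mul_right _ _
      rw [if_pos d1, if_pos d1, if_pos hle, hsub, coeff_Bser, if_pos d2,
        Nat.mul_div_cancel_left _ hi, Nat.mul_div_cancel_left _ hi, genChoose_pascal]
      ring
  · by_cases hle : i ≤ m
    · rw [if_pos hle, coeff_Bser]
      simp [h, not_dvd_sub hle h]
    · simp [h, hle]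

lemma Gser_eq {i : ℕ} (hi : 0 < i) : Gser i - Gser i * X^i = 1 := by
  ext m
  rw [map_sub, coeff_Gser, PowerSeries.coeff_mul_X_pow', coeff_one]
  rcases Nat.eq_zero_or_pos m with rfl | hm
  · simp [Nat.not_le_of_lt hi]
  · rw [if_neg (Nat.pos_iff_ne_zero.mp hm)]
    by_cases h : i ∣ m
    · have hle : i ≤ m := Nat.le_of_dvd hm h
      have : i ∣ m - i := (Nat.dvd_sub h dvd_rfl)
      rw [if_pos h, if_pos hle, coeff_Gser, if_pos this]
      ring
    · rw [if_neg h]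
      by_cases hle : i ≤ m
      · rw [if_pos hle, coeff_Gser, if_neg (not_dvd_sub hle h)]; ring
      · simp [hle]

lemma Bser_pred (a : ℚ) {i : ℕ} (hi : 0 < i) :
    Bser (a-1) i = Bser a i * Gser i := by
  have h5 := Gser_eq (i := i) hi
  calc Bser (a-1) i = Bser (a-1) i * (Gser i - Gser i * X^i) := by rw [h5, mul_one]
    _ = (Bser (a-1) i - Bser (a-1) i * X^i) * Gser i := by ring
    _ = Bser a i * Gser i := by rw [← Bser_eq a hi]

lemma Dop_Bser_aux (a : ℚ) {i : ℕ} (hi : 0 < i) :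
    Dop (Bser a i) = -(((i:ℚ)*a) • (Bser (a-1) i * X^i)) := by
  ext m
  rw [coeff_Dop, coeff_Bser, map_neg, PowerSeries.coeff_smul, PowerSeries.coeff_mul_X_pow',
    smul_eq_mul]
  by_cases h : i ∣ m
  · obtain ⟨k, rfl⟩ := h
    rcases k with _ | k
    · simp [Nat.not_le_of_lt hi]
    · have hle : i ≤ i * (k+1) := Nat.le_mul_of_pos_right i (Nat.succ_pos k)
      have hsub : i * (k+1) - i = i * k := by ring_nf; omega
      have d1 : i ∣ i * (k+1) := dvd_mul_right _ _
      have d2 : i ∣ i * k := dvd_mul_right _ _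
      rw [if_pos d1, if_pos hle, hsub, coeff_Bser, if_pos d2,
        Nat.mul_div_cancel_left _ hi, Nat.mul_div_cancel_left _ hi]
      have hh := genChoose_mul_succ a k
      push_cast at hh ⊢
      linear_combination ((i:ℚ) * (-1:ℚ)^(k+1)) * hh
  · by_cases hle : i ≤ m
    · rw [if_pos hle, coeff_Bser]
      simp [h, not_dvd_sub hle h]
    · simp [h, hle]

lemma Dop_Bser (a : ℚ) {i : ℕ} (hi : 0 < i) :
    Dop (Bser a i) = -((((i:ℚ)*a) • (Gser i * X^i)) * Bser a i) := by
  rw [Dop_Bser_aux a hi, Bser_pred a hi, smul_mul_assoc]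
  ring_nf



lemma sum_finset_sum_multiset {ι : Type*} (s : Finset ι) (f : ι → Multiset ℕ) :
    (∑ i ∈ s, f i).sum = ∑ i ∈ s, (f i).sum := by
  classical
  induction s using Finset.induction_on with
  | empty => simp
  | @insert a s ha ih => rw [Finset.sum_insert ha, Finset.sum_insert ha, Multiset.sum_add, ih]

lemma rebuild_multiset (m : Multiset ℕ) :
    ∑ a ∈ m.toFinset, Multiset.replicate (m.count a) a = m := by
  have h := Multiset.toFinset_sum_count_nsmul_eq m
  conv_rhs => rw [← h]
  apply Finset.sum_congr rfl
  intro a _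
  rw [Multiset.nsmul_singleton]

lemma sum_counts (m : Multiset ℕ) : ∑ a ∈ m.toFinset, a * m.count a = m.sum := by
  conv_rhs => rw [← rebuild_multiset m]
  rw [sum_finset_sum_multiset]
  apply Finset.sum_congr rfl
  intro a _
  rw [Multiset.sum_replicate, smul_eq_mul]
  ring

lemma parts_le {w : ℕ} (p : Nat.Partition w) {i : ℕ} (hi : i ∈ p.parts) : 1 ≤ i ∧ i ≤ w :=
  ⟨p.parts_pos hi, by
    simpa [p.parts_sum] using Multiset.single_le_sum (fun x _ => Nat.zero_le x) i hi⟩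

/-- the finsupp associated to a partition -/
noncomputable def toL {w : ℕ} (p : Nat.Partition w) : ℕ →₀ ℕ :=
  Finsupp.onFinset p.parts.toFinset (fun i => i * p.parts.count i)
    (fun i hne => Multiset.mem_toFinset.mpr (by
      by_contra hmem
      apply hne
      show i * p.parts.count i = 0
      rw [Multiset.count_eq_zero_of_notMem hmem, mul_zero]))

lemma toL_apply {w : ℕ} (p : Nat.Partition w) (i : ℕ) : toL p i = i * p.parts.count i := rfl

/-- the partition associated to a good finsupp -/
def toP (L w : ℕ) (l : ℕ →₀ ℕ) (h1 : ∑ i ∈ Finset.Icc 1 L, l i = w)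
    (h3 : ∀ i ∈ Finset.Icc 1 L, i ∣ l i) : Nat.Partition w where
  parts := ∑ i ∈ Finset.Icc 1 L, Multiset.replicate (l i / i) i
  parts_pos := by
    intro i hi
    obtain ⟨j, hj, hij⟩ := Multiset.mem_sum.mp hi
    obtain rfl := Multiset.eq_of_mem_replicate hij
    exact (Finset.mem_Icc.mp hj).1
  parts_sum := by
    rw [sum_finset_sum_multiset]
    calc ∑ i ∈ Finset.Icc 1 L, (Multiset.replicate (l i / i) i).sum
        = ∑ i ∈ Finset.Icc 1 L, l i := by
          apply Finset.sum_congr rfl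
          intro i hi
          rw [Multiset.sum_replicate, smul_eq_mul, Nat.div_mul_cancel (h3 i hi)]
      _ = w := h1

lemma toFinset_subset_Icc {w L : ℕ} (hw : w ≤ L) (p : Nat.Partition w) :
    p.parts.toFinset ⊆ Finset.Icc 1 L := by
  intro i hi
  rw [Multiset.mem_toFinset] at hi
  obtain ⟨h1, h2⟩ := parts_le p hi
  exact Finset.mem_Icc.mpr ⟨h1, le_trans h2 hw⟩

lemma count_not_mem_toFinset {m : Multiset ℕ} {i : ℕ} (hi : i ∉ m.toFinset) : m.count i = 0 :=
  Multiset.count_eq_zero_of_notMem (fun hc => hi (Multiset.mem_toFinset.mpr hc))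

lemma piW_eq_coeff (N : ℕ → ℚ) (L w : ℕ) (hw : w ≤ L) :
    piW N w = coeff w (∏ i ∈ Finset.Icc 1 L, Bser (moebiusConv N i) i) := by
  classical
  set A := moebiusConv N with hA
  rw [PowerSeries.coeff_prod]
  have hfilter : ∑ l ∈ (Finset.finsuppAntidiag (Finset.Icc 1 L) w).filter
        (fun l : ℕ →₀ ℕ => ∀ i ∈ Finset.Icc 1 L, i ∣ l i),
        (∏ i ∈ Finset.Icc 1 L, coeff (l i) (Bser (A i) i)) =
      ∑ l ∈ Finset.finsuppAntidiag (Finset.Icc 1 L) w,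
        ∏ i ∈ Finset.Icc 1 L, coeff (l i) (Bser (A i) i) := by
    apply Finset.sum_filter_of_ne
    intro l _ hne i hi
    by_contra hdvd
    exact hne (Finset.prod_eq_zero hi (by rw [coeff_Bser, if_neg hdvd]))
  rw [← hfilter, piW]
  have hpos : ∀ i ∈ Finset.Icc 1 L, 0 < i := fun i hi => (Finset.mem_Icc.mp hi).1
  have hmem' : ∀ l ∈ (Finset.finsuppAntidiag (Finset.Icc 1 L) w).filter
      (fun l : ℕ →₀ ℕ => ∀ i ∈ Finset.Icc 1 L, i ∣ l i),
      (∑ i ∈ Finset.Icc 1 L, l i = w) ∧ l.support ⊆ Finset.Icc 1 L ∧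
        ∀ i ∈ Finset.Icc 1 L, i ∣ l i := by
    intro l hl
    rw [Finset.mem_filter, Finset.mem_finsuppAntidiag] at hl
    exact ⟨hl.1.1, hl.1.2, hl.2⟩
  refine Finset.sum_bij' (fun p _ => toL p)
    (fun l hl => toP L w l (hmem' l hl).1 (hmem' l hl).2.2) ?_ ?_ ?_ ?_ ?_
  -- i maps into the filtered set
  · intro p _
    rw [Finset.mem_filter, Finset.mem_finsuppAntidiag]
    have hsub := toFinset_subset_Icc hw p
    refine ⟨⟨?_, ?_⟩, ?_⟩
    · calc (Finset.Icc 1 L).sum ⇑(toL p)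
          = ∑ i ∈ Finset.Icc 1 L, i * p.parts.count i :=
            Finset.sum_congr rfl (fun i _ => toL_apply p i)
        _ = ∑ i ∈ p.parts.toFinset, i * p.parts.count i := by
            symm
            apply Finset.sum_subset hsub
            intro i _ hi
            rw [count_not_mem_toFinset hi, mul_zero]
        _ = w := by rw [sum_counts, p.parts_sum]
    · exact subset_trans Finsupp.support_onFinset_subset hsub
    · intro i _
      rw [toL_apply]
      exact dvd_mul_right i _
  -- j maps into univ
  · intro l _
    exact Finset.mem_univ _
  -- j (i p) = p
  · intro p _
    apply Nat.Partition.ext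
    show ∑ i ∈ Finset.Icc 1 L, Multiset.replicate ((toL p i) / i) i = p.parts
    have hsub := toFinset_subset_Icc hw p
    have hrepl : ∀ i ∈ Finset.Icc 1 L, Multiset.replicate ((toL p i) / i) i
        = Multiset.replicate (p.parts.count i) i := by
      intro i hi
      rw [toL_apply, Nat.mul_div_cancel_left _ (hpos i hi)]
    rw [Finset.sum_congr rfl hrepl]
    conv_rhs => rw [← rebuild_multiset p.parts]
    exact (Finset.sum_subset hsub (fun i _ hi => by
      rw [count_not_mem_toFinset hi, Multiset.replicate_zero])).symm
  -- i (j l) = l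
  · intro l hl
    obtain ⟨h1, h2, h3⟩ := hmem' l hl
    ext i
    rw [toL_apply]
    show i * Multiset.count i (∑ j ∈ Finset.Icc 1 L, Multiset.replicate (l j / j) j) = l i
    rw [Multiset.count_sum']
    have hrc : ∀ j ∈ Finset.Icc 1 L, Multiset.count i (Multiset.replicate (l j / j) j)
        = if i = j then l j / j else 0 := by
      intro j _
      rw [Multiset.count_replicate]
      by_cases h : j = i
      · subst h; simp
      · rw [if_neg h, if_neg (fun hh => h hh.symm)]
    rw [Finset.sum_congr rfl hrc, Finset.sum_ite_eq (Finset.Icc 1 L) i (fun j => l j / j)]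
    by_cases hi : i ∈ Finset.Icc 1 L
    · rw [if_pos hi, Nat.mul_div_cancel' (h3 i hi)]
    · rw [if_neg hi, mul_zero]
      symm
      by_contra hne
      exact hi (h2 (Finsupp.mem_support_iff.mpr hne))
  -- values agree
  · intro p _
    have hsub := toFinset_subset_Icc hw p
    have hval : ∀ i ∈ Finset.Icc 1 L,
        coeff (toL p i) (Bser (A i) i)
        = (-1 : ℚ)^(p.parts.count i) * genChoose (A i) (p.parts.count i) := by
      intro i hi
      rw [toL_apply, coeff_Bser, if_pos (dvd_mul_right i _),
        Nat.mul_div_cancel_left _ (hpos i hi)]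
    rw [Finset.prod_congr rfl hval, Finset.prod_mul_distrib, Finset.prod_pow_eq_pow_sum]
    have hcard : ∑ i ∈ Finset.Icc 1 L, p.parts.count i = Multiset.card p.parts := by
      rw [← Multiset.toFinset_sum_count_eq p.parts]
      symm
      apply Finset.sum_subset hsub
      intro i _ hi
      exact count_not_mem_toFinset hi
    have hprod : ∏ i ∈ Finset.Icc 1 L, genChoose (A i) (p.parts.count i)
        = ∏ i ∈ p.parts.toFinset, genChoose (A i) (p.parts.count i) := by
      symm
      apply Finset.prod_subset hsub
      intro i _ hi
      rw [count_not_mem_toFinset hi, genChoose_zero]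
    rw [hcard, hprod]

/-- Möbius inversion. -/
lemma sum_divisors_moebiusConv (N : ℕ → ℚ) {r : ℕ} (hr : 0 < r) :
    ∑ i ∈ r.divisors, (i:ℚ) * moebiusConv N i = N r := by
  apply (ArithmeticFunction.sum_eq_iff_sum_smul_moebius_eq
    (f := fun i => (i:ℚ) * moebiusConv N i) (g := N)).mpr _ r hr
  intro m hm
  rw [Nat.sum_divisorsAntidiagonal' (f := fun a b => (ArithmeticFunction.moebius a) • N b)]
  rw [moebiusConv]
  have hm' : (m : ℚ) ≠ 0 := Nat.cast_ne_zero.mpr hm.ne'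
  rw [← mul_assoc, mul_one_div, div_self hm', one_mul]
  apply Finset.sum_congr rfl
  intro i _
  rw [zsmul_eq_mul]

/-- The geometric series `Σ c^m X^m`. -/
noncomputable def Gc (c : ℚ) : ℚ⟦X⟧ := PowerSeries.mk fun m => c ^ m

noncomputable def Fc (c : ℚ) : ℚ⟦X⟧ := 1 - C c * X

noncomputable def Tc (c : ℚ) : ℚ⟦X⟧ := (Gc c * C c) * X

lemma coeff_mul_X (f : ℚ⟦X⟧) (m : ℕ) :
    coeff m (f * X) = if 1 ≤ m then coeff (m-1) f else 0 := by
  rw [← pow_one (X : ℚ⟦X⟧), PowerSeries.coeff_mul_X_pow']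

lemma coeff_mul_C (f : ℚ⟦X⟧) (c : ℚ) (m : ℕ) : coeff m (f * C c) = coeff m f * c := by
  rw [mul_comm, PowerSeries.coeff_C_mul, mul_comm]

lemma Gc_mul_Fc (c : ℚ) : Gc c * Fc c = 1 := by
  have h : Gc c * Fc c = Gc c - (Gc c * C c) * X := by rw [Fc]; ring
  rw [h]
  ext m
  rw [map_sub, coeff_mul_X, coeff_mul_C, coeff_one]
  rcases Nat.eq_zero_or_pos m with rfl | hm
  · simp [Gc]
  · have h1' : 1 ≤ m := hm
    rw [if_pos h1', if_neg hm.ne']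
    simp only [Gc, coeff_mk]
    rw [← pow_succ, Nat.sub_add_cancel hm, sub_self]

lemma Dop_Fc (c : ℚ) : Dop (Fc c) = -(Tc c * Fc c) := by
  have h1 : Tc c * Fc c = C c * X := by
    calc Tc c * Fc c = (Gc c * Fc c) * (C c * X) := by rw [Tc]; ring
      _ = C c * X := by rw [Gc_mul_Fc, one_mul]
  rw [h1]
  ext m
  rw [coeff_Dop, map_neg, PowerSeries.coeff_C_mul, Fc, map_sub, coeff_one,
    PowerSeries.coeff_C_mul, coeff_X]
  rcases m with _ | m
  · simp
  · rcases m with _ | m <;> simp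

lemma coeff_Tc (c : ℚ) {r : ℕ} (hr : 1 ≤ r) : coeff r (Tc c) = c ^ r := by
  rw [Tc, coeff_mul_X, if_pos hr, coeff_mul_C]
  simp only [Gc, coeff_mk]
  rw [← pow_succ, Nat.sub_add_cancel hr]

lemma coeff_zero_Tc (c : ℚ) : coeff 0 (Tc c) = 0 := by
  rw [Tc, coeff_mul_X]
  simp

lemma coeff_Tser {i : ℕ} (hi : 0 < i) {r : ℕ} (hr : 0 < r) :
    coeff r (Gser i * X^i) = if i ∣ r then 1 else 0 := by
  rw [PowerSeries.coeff_mul_X_pow', coeff_Gser]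
  by_cases h : i ∣ r
  · have hle : i ≤ r := Nat.le_of_dvd hr h
    rw [if_pos hle, if_pos (Nat.dvd_sub h dvd_rfl), if_pos h]
  · rw [if_neg h]
    by_cases hle : i ≤ r
    · rw [if_pos hle, if_neg (not_dvd_sub hle h)]
    · rw [if_neg hle]

lemma coeff_zero_Tser {i : ℕ} (hi : 0 < i) : coeff 0 (Gser i * X^i) = 0 := by
  rw [PowerSeries.coeff_mul_X_pow', if_neg (by omega)]

end Stmt5
open Stmt5

/-- For `n ≥ 0`, a positive integer `q`, and
`N r = 1 + q^r + q^{2r} + ⋯ + q^{nr}`, one has `Σ_{w=0}^{n+1} π_w = 0`. -/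
theorem sum_pi_projective_space (n : ℕ) (q : ℕ) (hq : 1 ≤ q)
    (N : ℕ → ℚ)
    (hN : ∀ r : ℕ, 1 ≤ r → N r = ∑ j ∈ Finset.range (n + 1), (q : ℚ) ^ (j * r)) :
    ∑ w ∈ Finset.range (n + 2), piW N w = 0 := by
  classical
  set A := moebiusConv N with hA
  set f : ℚ⟦X⟧ := ∏ i ∈ Finset.Icc 1 (n+1), Bser (A i) i with hf
  set SS : ℚ⟦X⟧ := ∑ i ∈ Finset.Icc 1 (n+1), ((i:ℚ) * A i) • (Gser i * X^i) with hSS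
  set PP : ℚ⟦X⟧ := ∏ j ∈ Finset.range (n+1), Fc ((q:ℚ)^j) with hPP
  set TT : ℚ⟦X⟧ := ∑ j ∈ Finset.range (n+1), Tc ((q:ℚ)^j) with hTT
  have hpos : ∀ i ∈ Finset.Icc 1 (n+1), 0 < i := fun i hi => (Finset.mem_Icc.mp hi).1
  have hDf : Dop f = -(SS * f) :=
    Dop_prod _ _ _ (fun i hi => Dop_Bser (A i) (hpos i hi))
  have hDP : Dop PP = -(TT * PP) := Dop_prod _ _ _ (fun j _ => Dop_Fc _)
  have hSScoe : ∀ r : ℕ, 1 ≤ r → r ≤ n+1 → coeff r SS = N r := by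
    intro r h1 h2
    rw [hSS, map_sum]
    have he : ∀ i ∈ Finset.Icc 1 (n+1),
        coeff r (((i:ℚ) * A i) • (Gser i * X^i)) =
          if i ∈ r.divisors then (i:ℚ) * A i else 0 := by
      intro i hi
      rw [PowerSeries.coeff_smul, smul_eq_mul, coeff_Tser (hpos i hi) h1]
      by_cases h : i ∣ r
      · rw [if_pos h, if_pos (Nat.mem_divisors.mpr ⟨h, by omega⟩), mul_one]
      · rw [if_neg h, if_neg (fun hc => h (Nat.mem_divisors.mp hc).1), mul_zero]
    rw [Finset.sum_congr rfl he, Finset.sum_ite_mem]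
    have hsub : r.divisors ⊆ Finset.Icc 1 (n+1) := by
      intro i hi
      rw [Nat.mem_divisors] at hi
      have h3 := Nat.le_of_dvd (by omega) hi.1
      have h4 := Nat.pos_of_dvd_of_pos hi.1 (by omega)
      exact Finset.mem_Icc.mpr ⟨by omega, by omega⟩
    rw [Finset.inter_eq_right.mpr hsub]
    exact sum_divisors_moebiusConv N (by omega)
  have hSS0 : coeff 0 SS = 0 := by
    rw [hSS, map_sum]
    apply Finset.sum_eq_zero
    intro i hi
    rw [PowerSeries.coeff_smul, coeff_zero_Tser (hpos i hi), smul_zero]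
  have hTTcoe : ∀ r : ℕ, 1 ≤ r → coeff r TT = N r := by
    intro r h1
    rw [hTT, map_sum, hN r h1]
    apply Finset.sum_congr rfl
    intro j _
    rw [coeff_Tc _ h1, ← pow_mul]
  have hTT0 : coeff 0 TT = 0 := by
    rw [hTT, map_sum]
    exact Finset.sum_eq_zero (fun j _ => coeff_zero_Tc _)
  have hf0 : coeff 0 f = 1 := by
    rw [hf, coeff_zero_eq_constantCoeff, map_prod]
    exact Finset.prod_eq_one (fun i _ => constantCoeff_Bser _ _)
  have hP0 : coeff 0 PP = 1 := by
    rw [hPP, coeff_zero_eq_constantCoeff, map_prod]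
    apply Finset.prod_eq_one
    intro j _
    rw [Fc]
    simp
  have key : ∀ w : ℕ, w ≤ n+1 → coeff w f = coeff w PP := by
    intro w
    induction w using Nat.strong_induction_on with
    | _ w ih =>
      intro hw
      rcases w with _ | w
      · rw [hf0, hP0]
      · have hne : ((w+1:ℕ):ℚ) ≠ 0 := by positivity
        apply mul_left_cancel₀ hne
        have lhs : ((w+1:ℕ):ℚ) * coeff (w+1) f
            = -∑ k ∈ Finset.range (w+2), coeff k SS * coeff (w+1-k) f := by
          rw [← coeff_Dop, hDf, map_neg, coeff_mul,
            Finset.Nat.sum_antidiagonal_eq_sum_range_succ_mk]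
        have rhs : ((w+1:ℕ):ℚ) * coeff (w+1) PP
            = -∑ k ∈ Finset.range (w+2), coeff k TT * coeff (w+1-k) PP := by
          rw [← coeff_Dop, hDP, map_neg, coeff_mul,
            Finset.Nat.sum_antidiagonal_eq_sum_range_succ_mk]
        rw [lhs, rhs, neg_inj]
        apply Finset.sum_congr rfl
        intro k hk
        rw [Finset.mem_range] at hk
        rcases Nat.eq_zero_or_pos k with rfl | hk1
        · rw [hSS0, hTT0, zero_mul, zero_mul]
        · rw [hSScoe k hk1 (by omega), hTTcoe k hk1,
            ih (w+1-k) (by omega) (by omega)]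
  set Pq : Polynomial ℚ :=
    ∏ j ∈ Finset.range (n+1), (1 - Polynomial.C ((q:ℚ)^j) * Polynomial.X) with hPq
  have hcoe : PP = (Pq : ℚ⟦X⟧) := by
    rw [hPq, hPP, ← Polynomial.coeToPowerSeries.ringHom_apply, map_prod]
    apply Finset.prod_congr rfl
    intro j _
    rw [Polynomial.coeToPowerSeries.ringHom_apply, Polynomial.coe_sub, Polynomial.coe_mul,
      Polynomial.coe_one, Polynomial.coe_C, Polynomial.coe_X, Fc]
  have hdeg : Pq.natDegree < n+2 := by
    apply Nat.lt_succ_of_le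
    refine le_trans (Polynomial.natDegree_prod_le _ _) ?_
    have h1 : ∀ j ∈ Finset.range (n+1),
        (1 - Polynomial.C ((q:ℚ)^j) * Polynomial.X).natDegree ≤ 1 := by
      intro j _
      refine le_trans (Polynomial.natDegree_sub_le _ _) ?_
      have h2 := Polynomial.natDegree_C_mul_le ((q:ℚ)^j) Polynomial.X
      simp only [Polynomial.natDegree_X] at h2
      simp only [Polynomial.natDegree_one]
      omega
    refine le_trans (Finset.sum_le_sum h1) ?_
    simp
  calc ∑ w ∈ Finset.range (n+2), piW N w
      = ∑ w ∈ Finset.range (n+2), coeff w f :=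
        Finset.sum_congr rfl (fun w hw =>
          piW_eq_coeff N (n+1) w (by rw [Finset.mem_range] at hw; omega))
    _ = ∑ w ∈ Finset.range (n+2), coeff w PP :=
        Finset.sum_congr rfl (fun w hw =>
          key w (by rw [Finset.mem_range] at hw; omega))
    _ = ∑ w ∈ Finset.range (n+2), Pq.coeff w := by
        rw [hcoe]
        exact Finset.sum_congr rfl (fun w _ => Polynomial.coeff_coe _ _)
    _ = Polynomial.eval 1 Pq := by
        rw [Polynomial.eval_eq_sum_range' hdeg 1]
        simp
    _ = 0 := by
        rw [hPq, Polynomial.eval_prod]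
        apply Finset.prod_eq_zero (Finset.mem_range.mpr (Nat.succ_pos n))
        simp
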